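/- Let d ∈ N. There exists a constant c₃ > 0 depending only on the dimension d such that for any generalized line segment ℓ : [0,1] → Z^d and any ε > 0 satisfying ε·m_ℓ > 14√d, the cylinder K_Z = {z ∈ Z^d : min_{t∈[0,1]} ‖z − ℓ(t)‖₂ ≤ ε·m_ℓ} has cardinality |K_Z| ≥ c₃·ε^{d−1}·m_ℓ^d. -/

import Mathlib

open Set

/-- Euclidean norm on `Fin n → ℝ`. -/
noncomputable def euclNorm {n : ℕ} (x : Fin n → ℝ) : ℝ := Real.sqrt (∑ i, (x i) ^ 2)

/-- Coordinatewise cast of an integer vector to a real vector. -/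
def zr {n : ℕ} (x : Fin n → ℤ) : Fin n → ℝ := fun i => (x i : ℝ)

/-- The generalized line segment `t ↦ ⌊(1-t)x + ty⌋` determined by `x, y ∈ ℝ^d`. -/
noncomputable def glSeg {d : ℕ} (x y : Fin d → ℝ) (t : ℝ) : Fin d → ℤ :=
  fun i => ⌊(1 - t) * x i + t * y i⌋

/-- `m_ℓ = ‖ℓ(1) - ℓ(0)‖₂` for the generalized line segment determined by `x, y`. -/
noncomputable def mseg {d : ℕ} (x y : Fin d → ℝ) : ℝ :=
  euclNorm (zr (glSeg x y 1) - zr (glSeg x y 0))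

/-- The discrete cylinder of radius `ρ` around the generalized line segment
determined by `x, y`. -/
def cylZ {d : ℕ} (x y : Fin d → ℝ) (ρ : ℝ) : Set (Fin d → ℤ) :=
  {z | ∃ t ∈ Icc (0 : ℝ) 1, euclNorm (zr z - zr (glSeg x y t)) ≤ ρ}


lemma euclNorm0 {n : ℕ} (x : Fin n → ℝ) : 0 ≤ Real.sqrt (∑ i, (x i)^2) := Real.sqrt_nonneg _

lemma abs_le_euclNorm' {n : ℕ} (x : Fin n → ℝ) (i : Fin n) :
    |x i| ≤ Real.sqrt (∑ j, (x j) ^ 2) := by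
  rw [← Real.sqrt_sq_eq_abs]
  exact Real.sqrt_le_sqrt (Finset.single_le_sum (fun j _ => sq_nonneg (x j)) (Finset.mem_univ i))

lemma euclNorm_le' {n : ℕ} (x : Fin n → ℝ) (r : ℝ) (hr : 0 ≤ r) (h : ∀ i, |x i| ≤ r) :
    Real.sqrt (∑ j, (x j) ^ 2) ≤ Real.sqrt n * r := by
  have hsum : ∑ j, (x j)^2 ≤ n * r^2 := by
    calc ∑ j, (x j)^2 ≤ ∑ _j : Fin n, r^2 :=
          Finset.sum_le_sum (fun j _ => by
            have := h j; nlinarith [sq_abs (x j), abs_nonneg (x j)])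
      _ = n * r^2 := by simp [Finset.sum_const, Finset.card_univ]
  calc Real.sqrt (∑ j, (x j)^2) ≤ Real.sqrt (n * r^2) := Real.sqrt_le_sqrt hsum
    _ = Real.sqrt n * r := by
        rw [Real.sqrt_mul (by positivity), Real.sqrt_sq hr]

lemma convex_comb_bounds {t c c' : ℝ} (h0 : 0 ≤ t) (h1 : t ≤ 1) :
    min c c' ≤ (1-t)*c + t*c' ∧ (1-t)*c + t*c' ≤ max c c' := by
  constructor <;>
    nlinarith [min_le_left c c', min_le_right c c', le_max_left c c', le_max_right c c']

lemma exists_floor_t (c c' : ℝ) (v : ℤ) (h1 : ⌊min c c'⌋ ≤ v) (h2 : v ≤ ⌊max c c'⌋) :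
    ∃ t ∈ Icc (0:ℝ) 1, ⌊(1 - t) * c + t * c'⌋ = v := by
  set u : ℝ := max (min c c') (v:ℝ) with hu
  have humem : u ∈ Set.uIcc c c' := by
    rw [Set.uIcc]
    constructor
    · exact le_max_left _ _
    · exact max_le (min_le_max) (le_trans (by exact_mod_cast h2) (Int.floor_le _))
  have hcont : ContinuousOn (fun t : ℝ => (1-t)*c + t*c') (Set.uIcc 0 1) := by fun_prop
  have himg := intermediate_value_uIcc hcont
  norm_num at himg
  obtain ⟨t, ht, hft⟩ := himg humem
  refine ⟨t, ht, ?_⟩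
  simp only [] at hft
  rw [show (1 - t) * c + t * c' = u from hft]
  rcases le_total (min c c') (v:ℝ) with h | h
  · rw [hu, max_eq_right h, Int.floor_intCast]
  · rw [hu, max_eq_left h]
    exact le_antisymm h1 (Int.le_floor.mpr h)
lemma abs_le_euclNorm {n : ℕ} (x : Fin n → ℝ) (i : Fin n) : |x i| ≤ euclNorm x :=
  abs_le_euclNorm' x i

lemma cylZ_finite {d : ℕ} (x y : Fin d → ℝ) (ρ : ℝ) : (cylZ x y ρ).Finite := by
  have hsub : cylZ x y ρ ⊆ Set.pi Set.univ
      (fun j => Set.Icc (⌊min (x j) (y j)⌋ - ⌈ρ⌉) (⌊max (x j) (y j)⌋ + ⌈ρ⌉)) := by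
    rintro z ⟨t, ht, hz⟩ j _
    have habs : |(z j : ℝ) - (glSeg x y t j : ℝ)| ≤ ρ := by
      have := abs_le_euclNorm (zr z - zr (glSeg x y t)) j
      simpa [zr] using this.trans hz
    obtain ⟨hc1, hc2⟩ := convex_comb_bounds (c := x j) (c' := y j) ht.1 ht.2
    have hl1 : ⌊min (x j) (y j)⌋ ≤ glSeg x y t j := Int.floor_le_floor hc1
    have hl2 : glSeg x y t j ≤ ⌊max (x j) (y j)⌋ := Int.floor_le_floor hc2
    have hρ : ρ ≤ (⌈ρ⌉ : ℝ) := Int.le_ceil ρ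
    rw [abs_le] at habs
    constructor
    · have : ((⌊min (x j) (y j)⌋ - ⌈ρ⌉ : ℤ) : ℝ) ≤ (z j : ℝ) := by
        push_cast
        have : ((⌊min (x j) (y j)⌋ : ℤ) : ℝ) ≤ (glSeg x y t j : ℝ) := by exact_mod_cast hl1
        linarith [habs.1]
      exact_mod_cast this
    · have : (z j : ℝ) ≤ ((⌊max (x j) (y j)⌋ + ⌈ρ⌉ : ℤ) : ℝ) := by
        push_cast
        have : (glSeg x y t j : ℝ) ≤ ((⌊max (x j) (y j)⌋ : ℤ) : ℝ) := by exact_mod_cast hl2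
        linarith [habs.2]
      exact_mod_cast this
  exact (Set.Finite.pi (fun j => Set.finite_Icc _ _)).subset hsub
theorem cylinder_cardinality_lower_bound
    (d : ℕ) (hd : 0 < d) :
    ∃ c₃ : ℝ, 0 < c₃ ∧
      ∀ (x y : Fin d → ℝ) (ε : ℝ), 0 < ε →
        ε * mseg x y > 14 * Real.sqrt d →
        c₃ * ε ^ (d - 1) * mseg x y ^ d ≤ ((cylZ x y (ε * mseg x y)).ncard : ℝ) := by
  have hd' : (0:ℝ) < (d:ℝ) := by exact_mod_cast hd
  have hs : (0:ℝ) < Real.sqrt d := Real.sqrt_pos.mpr hd'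
  refine ⟨((2 * Real.sqrt d) ^ d)⁻¹, by positivity, ?_⟩
  intro x y ε hε hbig
  classical
  set s := Real.sqrt d with hs'
  set m := mseg x y with hm'
  set ρ := ε * m with hρ'
  have hm0 : 0 ≤ m := Real.sqrt_nonneg _
  have hs1 : (1:ℝ) ≤ s := by
    rw [hs']
    nlinarith [Real.sq_sqrt hd'.le, Real.sqrt_nonneg (d:ℝ),
      (by exact_mod_cast hd : (1:ℝ) ≤ (d:ℝ))]
  have hρpos : 0 < ρ := lt_trans (by nlinarith) hbig
  have hmpos : 0 < m := by nlinarith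
  -- the displacement vector
  set Δ : Fin d → ℤ := fun j => glSeg x y 1 j - glSeg x y 0 j with hΔ'
  have hmeq : m = Real.sqrt (∑ j, ((Δ j : ℝ))^2) := by
    rw [hm', mseg, euclNorm]
    congr 1
    apply Finset.sum_congr rfl
    intro j _
    simp [zr, hΔ']
  have hmsq : m^2 = ∑ j, ((Δ j : ℝ))^2 := by
    rw [hmeq]
    exact Real.sq_sqrt (Finset.sum_nonneg fun j _ => sq_nonneg _)
  -- choose the dominant coordinate
  obtain ⟨i₀, -, hmax⟩ := Finset.exists_max_image Finset.univ (fun j => (Δ j)^2)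
    ⟨⟨0, hd⟩, Finset.mem_univ _⟩
  have hΔbig : m ≤ s * |((Δ i₀ : ℤ) : ℝ)| := by
    have hsum : ∑ j, ((Δ j : ℝ))^2 ≤ (d:ℝ) * ((Δ i₀ : ℝ))^2 := by
      calc ∑ j, ((Δ j : ℝ))^2 ≤ ∑ _j : Fin d, ((Δ i₀ : ℝ))^2 := by
            apply Finset.sum_le_sum
            intro j _
            exact_mod_cast hmax j (Finset.mem_univ j)
        _ = (d:ℝ) * ((Δ i₀ : ℝ))^2 := by
            simp [Finset.sum_const, Finset.card_univ]
    calc m = Real.sqrt (∑ j, ((Δ j : ℝ))^2) := hmeq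
      _ ≤ Real.sqrt ((d:ℝ) * ((Δ i₀ : ℝ))^2) := Real.sqrt_le_sqrt hsum
      _ = s * |((Δ i₀ : ℤ) : ℝ)| := by
          rw [Real.sqrt_mul hd'.le, Real.sqrt_sq_eq_abs, hs']
  set a : ℤ := glSeg x y 0 i₀ with ha'
  set b : ℤ := glSeg x y 1 i₀ with hb'
  have hΔab : Δ i₀ = b - a := rfl
  set r : ℤ := ⌊ρ / s⌋ with hr'
  have hr14 : (14:ℤ) ≤ r := by
    rw [hr']
    apply Int.le_floor.mpr
    rw [le_div_iff₀ hs]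
    push_cast
    linarith
  have hr0 : (0:ℤ) ≤ r := by linarith
  have hrρ : (r:ℝ) ≤ ρ / s := Int.floor_le _
  have hr1 : ρ / s ≤ (r:ℝ) + 1 := (Int.lt_floor_add_one _).le
  -- the parameter choice function
  set T : ℤ → ℝ := fun v =>
    if h : ∃ t ∈ Icc (0:ℝ) 1, ⌊(1 - t) * x i₀ + t * y i₀⌋ = v then h.choose else 0 with hT'
  have ha0 : a = ⌊x i₀⌋ := by simp [ha', glSeg]
  have hb0 : b = ⌊y i₀⌋ := by simp [hb', glSeg]
  have hT : ∀ v : ℤ, min a b ≤ v → v ≤ max a b →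
      T v ∈ Icc (0:ℝ) 1 ∧ glSeg x y (T v) i₀ = v := by
    intro v h1 h2
    have hex : ∃ t ∈ Icc (0:ℝ) 1, ⌊(1 - t) * x i₀ + t * y i₀⌋ = v := by
      apply exists_floor_t
      · rw [show ⌊min (x i₀) (y i₀)⌋ = min ⌊x i₀⌋ ⌊y i₀⌋ from Monotone.map_min Int.floor_mono,
          ← ha0, ← hb0]; exact h1
      · rw [show ⌊max (x i₀) (y i₀)⌋ = max ⌊x i₀⌋ ⌊y i₀⌋ from Monotone.map_max Int.floor_mono,
          ← ha0, ← hb0]; exact h2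
    have hspec := hex.choose_spec
    rw [hT']
    simp only [dif_pos hex]
    exact ⟨hspec.1, by simp [glSeg]; exact hspec.2⟩
  -- the candidate set
  set D : Finset (Fin d → ℤ) := Fintype.piFinset
    (fun j => if j = i₀ then Finset.Icc (min a b) (max a b) else Finset.Icc (-r) r) with hD'
  set φ : (Fin d → ℤ) → (Fin d → ℤ) :=
    fun w j => if j = i₀ then w i₀ else glSeg x y (T (w i₀)) j + w j with hφ'
  have hwmem : ∀ w ∈ D, w i₀ ∈ Finset.Icc (min a b) (max a b) := by
    intro w hw
    have := (Fintype.mem_piFinset.mp hw) i₀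
    simpa using this
  have hsubset : ↑(D.image φ) ⊆ cylZ x y ρ := by
    intro z hz
    rw [Finset.coe_image] at hz
    obtain ⟨w, hw, rfl⟩ := hz
    have hv := Finset.mem_Icc.mp (hwmem w hw)
    obtain ⟨ht01, htfl⟩ := hT (w i₀) hv.1 hv.2
    refine ⟨T (w i₀), ht01, ?_⟩
    have hcoord : ∀ j, |(zr (φ w) - zr (glSeg x y (T (w i₀)))) j| ≤ (r:ℝ) := by
      intro j
      by_cases hj : j = i₀
      · subst hj
        simp [zr, hφ', htfl]
        exact_mod_cast hr0
      · have hwj := (Fintype.mem_piFinset.mp hw) j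
        rw [if_neg hj] at hwj
        have := Finset.mem_Icc.mp hwj
        simp [zr, hφ', if_neg hj]
        rw [abs_le]
        constructor
        · push_cast; have : (-r:ℝ) ≤ (w j : ℝ) := by exact_mod_cast this.1
          push_cast at this ⊢; linarith
        · push_cast; have : (w j : ℝ) ≤ (r:ℝ) := by exact_mod_cast this.2
          linarith
    calc euclNorm (zr (φ w) - zr (glSeg x y (T (w i₀))))
        ≤ Real.sqrt d * (r:ℝ) := by
          rw [euclNorm]
          exact euclNorm_le' _ _ (by exact_mod_cast hr0) hcoord
      _ ≤ ρ := by
          rw [← hs']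
          calc s * (r:ℝ) ≤ s * (ρ / s) := by
                apply mul_le_mul_of_nonneg_left hrρ hs.le
            _ = ρ := by field_simp
  have hinj : Set.InjOn φ ↑D := by
    intro w hw w' hw' heq
    have hv : w i₀ = w' i₀ := by
      have := congrFun heq i₀
      simpa [hφ'] using this
    funext j
    by_cases hj : j = i₀
    · subst hj; exact hv
    · have := congrFun heq j
      simp only [hφ', if_neg hj] at this
      rw [hv] at this
      omega
  -- cardinality computation
  have hDcard : D.card = ((max a b + 1 - min a b).toNat) * ((r + 1 - (-r)).toNat) ^ (d-1) := by
    rw [hD', Fintype.card_piFinset]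
    rw [← Finset.mul_prod_erase Finset.univ _ (Finset.mem_univ i₀)]
    rw [if_pos rfl, Int.card_Icc]
    congr 1
    have : ∀ j ∈ Finset.univ.erase i₀,
        (if j = i₀ then Finset.Icc (min a b) (max a b) else Finset.Icc (-r) r).card
          = (r + 1 - (-r)).toNat := by
      intro j hj
      rw [if_neg (Finset.mem_erase.mp hj).1, Int.card_Icc]
    rw [Finset.prod_congr rfl this, Finset.prod_const, Finset.card_erase_of_mem (Finset.mem_univ i₀),
      Finset.card_univ, Fintype.card_fin]
  have hfin := cylZ_finite x y ρ
  have hcard : (D.card : ℝ) ≤ ((cylZ x y ρ).ncard : ℝ) := by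
    have h1 : (↑(D.image φ) : Set (Fin d → ℤ)).ncard ≤ (cylZ x y ρ).ncard :=
      Set.ncard_le_ncard hsubset hfin
    rw [Set.ncard_coe_finset, Finset.card_image_of_injOn hinj] at h1
    exact_mod_cast h1
  -- numeric bounds
  have hab : min a b ≤ max a b := min_le_max
  have habs : |((Δ i₀ : ℤ):ℝ)| = ((max a b : ℤ):ℝ) - ((min a b : ℤ):ℝ) := by
    rw [hΔab]
    have : max a b - min a b = |b - a| := by
      rcases le_total a b with h | h
      · rw [max_eq_right h, min_eq_left h, abs_of_nonneg (by omega)]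
      · rw [max_eq_left h, min_eq_right h, abs_of_nonpos (by omega)]; ring
    rw [← Int.cast_abs, ← this]
    push_cast
    ring
  have h1 : m / s ≤ ((max a b + 1 - min a b : ℤ) : ℝ) := by
    rw [div_le_iff₀ hs]
    push_cast
    rw [mul_comm]
    calc m ≤ s * |((Δ i₀ : ℤ):ℝ)| := hΔbig
      _ ≤ s * ((max a b : ℝ) - (min a b : ℝ) + 1) := by
          apply mul_le_mul_of_nonneg_left _ hs.le
          rw [habs]; push_cast; linarith
      _ = s * ((max a b : ℝ) + 1 - (min a b : ℝ)) := by ring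
  have h2 : ρ / s ≤ ((r + 1 - (-r) : ℤ) : ℝ) := by
    push_cast
    have : (0:ℝ) ≤ (r:ℝ) := by exact_mod_cast hr0
    linarith
  -- put it together
  obtain ⟨e, rfl⟩ : ∃ e, d = e + 1 := ⟨d - 1, (Nat.succ_pred_eq_of_pos hd).symm⟩
  have hde : (e + 1) - 1 = e := rfl
  have hDreal : (D.card : ℝ)
      = ((max a b + 1 - min a b : ℤ) : ℝ) * ((r + 1 - (-r) : ℤ) : ℝ) ^ e := by
    have e1 : (((max a b + 1 - min a b).toNat : ℕ) : ℝ) = ((max a b + 1 - min a b : ℤ) : ℝ) := by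
      exact_mod_cast congrArg (fun n : ℤ => (n : ℝ)) (Int.toNat_of_nonneg (by omega : (0:ℤ) ≤ max a b + 1 - min a b))
    have e2 : (((r + 1 - (-r)).toNat : ℕ) : ℝ) = ((r + 1 - (-r) : ℤ) : ℝ) := by
      exact_mod_cast congrArg (fun n : ℤ => (n : ℝ)) (Int.toNat_of_nonneg (by omega : (0:ℤ) ≤ r + 1 - (-r)))
    rw [hDcard, hde, Nat.cast_mul, Nat.cast_pow, e1, e2]
  calc ((2 * s) ^ (e+1))⁻¹ * ε ^ ((e+1) - 1) * m ^ (e+1)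
      ≤ (m / s) * (ρ / s) ^ e := by
        rw [hde]
        have key : ((2 * s) ^ (e+1))⁻¹ ≤ ((s) ^ (e+1))⁻¹ := by
          apply inv_anti₀ (by positivity)
          apply pow_le_pow_left₀ hs.le
          linarith
        have hrw : (m / s) * (ρ / s) ^ e = (s ^ (e+1))⁻¹ * (ε ^ e * m ^ (e+1)) := by
          rw [hρ']
          ring
        rw [hrw]
        have hnn : (0:ℝ) ≤ ε ^ e * m ^ (e+1) := by positivity
        calc ((2 * s) ^ (e+1))⁻¹ * ε ^ e * m ^ (e+1)
            = ((2 * s) ^ (e+1))⁻¹ * (ε ^ e * m ^ (e+1)) := by ring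
          _ ≤ (s ^ (e+1))⁻¹ * (ε ^ e * m ^ (e+1)) := by
              apply mul_le_mul_of_nonneg_right key hnn
    _ ≤ ((max a b + 1 - min a b : ℤ) : ℝ) * ((r + 1 - (-r) : ℤ) : ℝ) ^ e := by
        apply mul_le_mul h1 (pow_le_pow_left₀ (by positivity) h2 e) (by positivity) ?_
        calc (0:ℝ) ≤ m / s := by positivity
          _ ≤ _ := h1
    _ = (D.card : ℝ) := hDreal.symm
    _ ≤ ((cylZ x y ρ).ncard : ℝ) := hcard
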